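/- In the constrained Stackelberg setting with n ≥ 3 identical linear servers, for every attack strength α ≥ 0 there exists an optimal Stackelberg equilibrium (x^m, x^s) whose aggregate profile x = x^m + x^s satisfies x_1 + α ≥ x_2. -/

import Mathlib

open Finset

/-- System cost `C^α(x) = (1/n) ∑ᵢ xᵢ τᵢ(xᵢ) + α x₁ / n` (server 1 is index 0). -/
noncomputable def cost (n : ℕ) [NeZero n] (τ : Fin n → ℝ → ℝ) (α : ℝ) (x : Fin n → ℝ) : ℝ :=
  (∑ i, x i * τ i (x i)) / (n : ℝ) + α * x 0 / (n : ℝ)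

/-- Attacked delay functions: `τ₁^α = τ₁ + α`, `τᵢ^α = τᵢ` for `i > 1`. -/
noncomputable def tauA (n : ℕ) [NeZero n] (τ : Fin n → ℝ → ℝ) (α : ℝ) (i : Fin n) (z : ℝ) : ℝ :=
  τ i z + if i = 0 then α else 0

/-- A (partial) scheduling profile of total mass `mass`: nonnegative with entries summing to `mass`. -/
def IsProfile (n : ℕ) (mass : ℝ) (x : Fin n → ℝ) : Prop :=
  (∀ i, 0 ≤ x i) ∧ ∑ i, x i = mass

/-- Identical linear delay functions `τᵢ(x) = x`. -/
def lin (n : ℕ) : Fin n → ℝ → ℝ := fun _ z => z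

/-- Feasible machine (leader) policy: nonnegative, nothing on server 1 (index 0),
total mass `n - 1` on servers 2,…,n. -/
def MachPolicy (n : ℕ) [NeZero n] (xm : Fin n → ℝ) : Prop :=
  (∀ i, 0 ≤ xm i) ∧ xm 0 = 0 ∧ ∑ i, xm i = (n : ℝ) - 1

/-- Feasible selfish (follower) profile: mass 1 split between servers 1 and 2. -/
def SelfFeasible (n : ℕ) [NeZero n] (xs : Fin n → ℝ) : Prop :=
  (∀ i, 0 ≤ xs i) ∧ xs 0 + xs 1 = 1 ∧ ∀ i, i ≠ 0 → i ≠ 1 → xs i = 0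

/-- Nash response of the selfish jobs to the machine policy `xm`. -/
def NashResp (n : ℕ) [NeZero n] (α : ℝ) (xm xs : Fin n → ℝ) : Prop :=
  SelfFeasible n xs ∧
  (0 < xs 0 → xs 0 + α ≤ xs 1 + xm 1) ∧
  (0 < xs 1 → xs 1 + xm 1 ≤ xs 0 + α)

/-- Optimal Stackelberg equilibrium. -/
def OptStackEq (n : ℕ) [NeZero n] (α : ℝ) (xm xs : Fin n → ℝ) : Prop :=
  MachPolicy n xm ∧ NashResp n α xm xs ∧
  ∀ ym ys : Fin n → ℝ, MachPolicy n ym → NashResp n α ym ys →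
    cost n (lin n) α (xm + xs) ≤ cost n (lin n) α (ym + ys)

/- ------------------------- auxiliary lemmas ------------------------- -/

lemma fin_zero_ne_one (n : ℕ) [NeZero n] (hn : 3 ≤ n) : (0 : Fin n) ≠ 1 := by
  simp [Fin.ext_iff, Fin.val_one', Nat.mod_eq_of_lt (by omega : 1 < n)]

lemma sum_split (n : ℕ) [NeZero n] (hn : 3 ≤ n) (f : Fin n → ℝ) :
    ∑ i, f i = f 0 + f 1 + ∑ i ∈ ((univ.erase (0:Fin n)).erase 1), f i := by
  have h01 := fin_zero_ne_one n hn
  rw [← Finset.add_sum_erase _ f (Finset.mem_univ 0),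
      ← Finset.add_sum_erase _ f
        (by simp [Finset.mem_erase, h01.symm] : (1:Fin n) ∈ univ.erase 0)]
  ring

lemma card_rest (n : ℕ) [NeZero n] (hn : 3 ≤ n) :
    ((univ.erase (0 : Fin n)).erase 1).card = n - 2 := by
  have h01 := fin_zero_ne_one n hn
  rw [Finset.card_erase_of_mem, Finset.card_erase_of_mem] <;>
    simp [Finset.mem_erase, h01.symm, Fin.ext_iff]
  omega

lemma mem_rest (n : ℕ) [NeZero n] {i : Fin n}
    (hi : i ∈ (univ.erase (0 : Fin n)).erase 1) : i ≠ 0 ∧ i ≠ 1 := by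
  simp only [Finset.mem_erase, Finset.mem_univ, and_true] at hi
  exact ⟨hi.2, hi.1⟩

lemma key_ineq (α c d M : ℝ) (hα : 0 ≤ α) (hd0 : 0 < d) (hc0 : 0 < c)
    (hcd : (M - 2) * c = d) :
    (1+α)*(1+α) + 2*c*(M - 1 - (1+α+d)) + (M-2)*c*c < (1+α+d)*(1+α+d) := by
  nlinarith [mul_pos hc0 hd0, mul_nonneg hα hc0.le, mul_nonneg hα hd0.le,
    sq_nonneg d, mul_pos hd0 hd0]

/-- for every attack strength there is an optimal Stackelberg
equilibrium whose aggregate profile satisfies `x₁ + α ≥ x₂`. -/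
theorem opt_stackelberg_exists_with_constraint (n : ℕ) [NeZero n] (hn : 3 ≤ n)
    (α : ℝ) (hα : 0 ≤ α) :
    ∃ xm xs : Fin n → ℝ, OptStackEq n α xm xs ∧
      (xm + xs) 1 ≤ (xm + xs) 0 + α := by
  have h01 := fin_zero_ne_one n hn
  have h10 : (1 : Fin n) ≠ 0 := h01.symm
  have hn3 : (3:ℝ) ≤ (n:ℝ) := by exact_mod_cast hn
  have hn2 : (0:ℝ) < (n:ℝ) - 2 := by linarith
  set s : Finset (Fin n) := (univ.erase (0:Fin n)).erase 1 with hs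
  have hcards : ((s.card : ℝ)) = (n:ℝ) - 2 := by
    rw [card_rest n hn]
    have : (2:ℕ) ≤ n := by omega
    push_cast [Nat.cast_sub this]
    ring
  -- the feasible set
  set S : Set ((Fin n → ℝ) × (Fin n → ℝ)) :=
    {p | MachPolicy n p.1 ∧ NashResp n α p.1 p.2} with hSdef
  -- the objective
  set F : ((Fin n → ℝ) × (Fin n → ℝ)) → ℝ :=
    fun p => cost n (lin n) α (p.1 + p.2) with hFdef
  have hFcont : Continuous F := by
    simp only [hFdef, cost, lin, Pi.add_apply]
    fun_prop
  -- S is closed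
  have hclosed : IsClosed S := by
    have h1 : IsClosed {p : (Fin n → ℝ) × (Fin n → ℝ) | ∀ i, 0 ≤ p.1 i} := by
      rw [Set.setOf_forall]
      exact isClosed_iInter fun i => isClosed_le (by fun_prop) (by fun_prop)
    have h2 : IsClosed {p : (Fin n → ℝ) × (Fin n → ℝ) | p.1 0 = 0} :=
      isClosed_eq (by fun_prop) continuous_const
    have h3 : IsClosed {p : (Fin n → ℝ) × (Fin n → ℝ) | ∑ i, p.1 i = (n:ℝ) - 1} :=
      isClosed_eq (by fun_prop) continuous_const
    have h4 : IsClosed {p : (Fin n → ℝ) × (Fin n → ℝ) | ∀ i, 0 ≤ p.2 i} := by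
      rw [Set.setOf_forall]
      exact isClosed_iInter fun i => isClosed_le (by fun_prop) (by fun_prop)
    have h5 : IsClosed {p : (Fin n → ℝ) × (Fin n → ℝ) | p.2 0 + p.2 1 = 1} :=
      isClosed_eq (by fun_prop) continuous_const
    have h6 : IsClosed {p : (Fin n → ℝ) × (Fin n → ℝ) |
        ∀ i, i ≠ 0 → i ≠ 1 → p.2 i = 0} := by
      rw [Set.setOf_forall]
      refine isClosed_iInter fun i => ?_
      by_cases hi0 : i = 0
      · simp [hi0]
      by_cases hi1 : i = 1
      · simp [hi1]
      · have : {p : (Fin n → ℝ) × (Fin n → ℝ) | i ≠ 0 → i ≠ 1 → p.2 i = 0}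
            = {p | p.2 i = 0} := by
          ext p; simp [hi0, hi1]
        rw [this]
        exact isClosed_eq (by fun_prop) continuous_const
    have h7 : IsClosed {p : (Fin n → ℝ) × (Fin n → ℝ) |
        0 < p.2 0 → p.2 0 + α ≤ p.2 1 + p.1 1} := by
      have : {p : (Fin n → ℝ) × (Fin n → ℝ) | 0 < p.2 0 → p.2 0 + α ≤ p.2 1 + p.1 1}
          = {p | p.2 0 ≤ 0} ∪ {p | p.2 0 + α ≤ p.2 1 + p.1 1} := by
        ext p
        simp only [Set.mem_setOf_eq, Set.mem_union]
        constructor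
        · intro h
          rcases le_or_gt (p.2 0) 0 with h' | h'
          · exact Or.inl h'
          · exact Or.inr (h h')
        · rintro (h | h) h' <;> [linarith; exact h]
      rw [this]
      exact (isClosed_le (by fun_prop) continuous_const).union
        (isClosed_le (by fun_prop) (by fun_prop))
    have h8 : IsClosed {p : (Fin n → ℝ) × (Fin n → ℝ) |
        0 < p.2 1 → p.2 1 + p.1 1 ≤ p.2 0 + α} := by
      have : {p : (Fin n → ℝ) × (Fin n → ℝ) | 0 < p.2 1 → p.2 1 + p.1 1 ≤ p.2 0 + α}
          = {p | p.2 1 ≤ 0} ∪ {p | p.2 1 + p.1 1 ≤ p.2 0 + α} := by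
        ext p
        simp only [Set.mem_setOf_eq, Set.mem_union]
        constructor
        · intro h
          rcases le_or_gt (p.2 1) 0 with h' | h'
          · exact Or.inl h'
          · exact Or.inr (h h')
        · rintro (h | h) h' <;> [linarith; exact h]
      rw [this]
      exact (isClosed_le (by fun_prop) continuous_const).union
        (isClosed_le (by fun_prop) (by fun_prop))
    have hSeq : S = {p : (Fin n → ℝ) × (Fin n → ℝ) | ∀ i, 0 ≤ p.1 i}
        ∩ {p | p.1 0 = 0} ∩ {p | ∑ i, p.1 i = (n:ℝ) - 1}
        ∩ {p | ∀ i, 0 ≤ p.2 i} ∩ {p | p.2 0 + p.2 1 = 1}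
        ∩ {p | ∀ i, i ≠ 0 → i ≠ 1 → p.2 i = 0}
        ∩ {p | 0 < p.2 0 → p.2 0 + α ≤ p.2 1 + p.1 1}
        ∩ {p | 0 < p.2 1 → p.2 1 + p.1 1 ≤ p.2 0 + α} := by
      ext p
      simp only [hSdef, Set.mem_setOf_eq, Set.mem_inter_iff, MachPolicy, NashResp,
        SelfFeasible]
      tauto
    rw [hSeq]
    exact ((((((h1.inter h2).inter h3).inter h4).inter h5).inter h6).inter h7).inter h8
  -- S is contained in a compact box
  have hsub : S ⊆ (Set.Icc (0 : Fin n → ℝ) (fun _ => (n:ℝ))) ×ˢ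
      (Set.Icc (0 : Fin n → ℝ) (fun _ => (n:ℝ))) := by
    rintro p ⟨⟨hm1, hm2, hm3⟩, ⟨⟨hs1, hs2, hs3⟩, -, -⟩⟩
    constructor
    · rw [Set.mem_Icc]
      constructor
      · intro i; exact hm1 i
      · intro i
        have : p.1 i ≤ ∑ j, p.1 j :=
          Finset.single_le_sum (fun j _ => hm1 j) (Finset.mem_univ i)
        rw [hm3] at this
        simpa using by linarith
    · rw [Set.mem_Icc]
      constructor
      · intro i; exact hs1 i
      · intro i
        by_cases hi0 : i = 0
        · subst hi0
          have := hs1 1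
          simp only
          linarith
        by_cases hi1 : i = 1
        · subst hi1
          have := hs1 0
          simp only
          linarith
        · rw [hs3 i hi0 hi1]
          simp only
          linarith
  have hcompact : IsCompact S :=
    ((isCompact_Icc).prod (isCompact_Icc)).of_isClosed_subset hclosed hsub
  -- S is nonempty
  have hSne : S.Nonempty := by
    set zm : Fin n → ℝ := fun i => if i = 0 then 0 else 1 with hzm
    set zs : Fin n → ℝ := fun i => if i = 0 then max (1 - α/2) 0
      else if i = 1 then min (α/2) 1 else 0 with hzs
    have hzs0 : zs 0 = max (1 - α/2) 0 := by simp [hzs]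
    have hzs1 : zs 1 = min (α/2) 1 := by simp [hzs, h10]
    have hzm1 : zm 1 = 1 := by simp [hzm, h10]
    have hsum1 : max (1 - α/2) 0 + min (α/2) 1 = 1 := by
      rcases le_or_gt α 2 with h | h
      · rw [max_eq_left (by linarith), min_eq_left (by linarith)]; ring
      · rw [max_eq_right (by linarith), min_eq_right (by linarith)]; ring
    refine ⟨⟨zm, zs⟩, ⟨?_, ?_, ?_⟩, ⟨?_, ?_, ?_⟩, ?_, ?_⟩
    · intro i
      show 0 ≤ zm i
      simp only [hzm]
      split <;> norm_num
    · simp [hzm]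
    · show ∑ i, zm i = (n:ℝ) - 1
      rw [sum_split n hn]
      have : ∑ i ∈ s, zm i = ∑ i ∈ s, 1 := by
        refine Finset.sum_congr rfl fun i hi => ?_
        simp [hzm, (mem_rest n hi).1]
      rw [this, Finset.sum_const, nsmul_eq_mul, hcards, hzm1]
      simp [hzm]
      ring
    · intro i
      show 0 ≤ zs i
      simp only [hzs]
      split
      · positivity
      split
      · exact le_min (by positivity) (by norm_num)
      · exact le_refl 0
    · show zs 0 + zs 1 = 1
      rw [hzs0, hzs1]; exact hsum1
    · intro i hi0 hi1; simp [hzs, hi0, hi1]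
    · show 0 < zs 0 → zs 0 + α ≤ zs 1 + zm 1
      rw [hzs0, hzs1, hzm1]
      intro hpos
      rcases le_or_gt α 2 with h | h
      · rw [max_eq_left (by linarith), min_eq_left (by linarith)]
        linarith
      · rw [max_eq_right (by linarith)] at hpos
        linarith
    · show 0 < zs 1 → zs 1 + zm 1 ≤ zs 0 + α
      rw [hzs0, hzs1, hzm1]
      intro hpos
      rcases le_or_gt α 2 with h | h
      · rw [max_eq_left (by linarith), min_eq_left (by linarith)]
        linarith
      · rw [max_eq_right (by linarith), min_eq_right (by linarith)]
        linarith
  -- obtain the minimizer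
  obtain ⟨p, hpS, hpmin⟩ := hcompact.exists_isMinOn hSne hFcont.continuousOn
  have hmin : ∀ q ∈ S, F p ≤ F q := fun q hq => hpmin hq
  obtain ⟨hmach, hnash⟩ := hpS
  set xm := p.1 with hxm
  set xs := p.2 with hxs
  obtain ⟨hm1, hm2, hm3⟩ := hmach
  obtain ⟨⟨hs1, hs2, hs3⟩, hN1, hN2⟩ := hnash
  refine ⟨xm, xs, ⟨⟨hm1, hm2, hm3⟩, ⟨⟨hs1, hs2, hs3⟩, hN1, hN2⟩,
    fun ym ys hym hys => hmin ⟨ym, ys⟩ ⟨hym, hys⟩⟩, ?_⟩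
  -- the constraint
  by_contra hcon
  push_neg at hcon
  simp only [Pi.add_apply, hm2, zero_add] at hcon
  -- xs 1 must be 0
  have hxs1 : xs 1 = 0 := by
    by_contra h
    have hpos : 0 < xs 1 := lt_of_le_of_ne (hs1 1) (Ne.symm h)
    have := hN2 hpos
    linarith
  have hxs0 : xs 0 = 1 := by linarith
  rw [hxs1, add_zero, hxs0] at hcon
  -- hcon : 1 + α < xm 1
  obtain ⟨d, hd⟩ : ∃ x : ℝ, x = xm 1 - (1 + α) := ⟨_, rfl⟩
  have hd0 : 0 < d := by rw [hd]; linarith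
  obtain ⟨c, hc⟩ : ∃ x : ℝ, x = d / ((n:ℝ) - 2) := ⟨_, rfl⟩
  have hc0 : 0 < c := by rw [hc]; exact div_pos hd0 hn2
  have hcd : ((n:ℝ) - 2) * c = d := by
    rw [hc]; field_simp
  -- the improved machine policy
  obtain ⟨ym, hym⟩ : ∃ y : Fin n → ℝ,
      y = fun i => if i = 0 then 0 else if i = 1 then 1 + α else xm i + c := ⟨_, rfl⟩
  have hym0 : ym 0 = 0 := by simp [hym]
  have hym1 : ym 1 = 1 + α := by simp [hym, h10]
  -- sum of xm over the rest
  have hsumrest : ∑ i ∈ s, xm i = (n:ℝ) - 1 - xm 1 := by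
    have := sum_split n hn xm
    rw [hm3, hm2] at this
    linarith
  have hymS : (⟨ym, xs⟩ : (Fin n → ℝ) × (Fin n → ℝ)) ∈ S := by
    refine ⟨⟨fun i => ?_, hym0, ?_⟩, ⟨⟨hs1, hs2, hs3⟩, ?_, ?_⟩⟩
    · show 0 ≤ ym i
      simp only [hym]
      split
      · exact le_refl 0
      split
      · linarith
      · have := hm1 i; linarith
    · show ∑ i, ym i = (n:ℝ) - 1
      rw [sum_split n hn, hym0, hym1]
      have : ∑ i ∈ s, ym i = ∑ i ∈ s, (xm i + c) := by
        refine Finset.sum_congr rfl fun i hi => ?_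
        obtain ⟨hi0, hi1⟩ := mem_rest n hi
        simp [hym, hi0, hi1]
      rw [this, Finset.sum_add_distrib, Finset.sum_const, nsmul_eq_mul, hcards,
        hsumrest, hcd]
      rw [hd]; ring
    · show 0 < xs 0 → xs 0 + α ≤ xs 1 + ym 1
      intro hpos
      rw [hym1, hxs0, hxs1]
      linarith
    · show 0 < xs 1 → xs 1 + ym 1 ≤ xs 0 + α
      intro hpos
      rw [hxs1] at hpos
      linarith
  have hle := hmin ⟨ym, xs⟩ hymS
  -- compute the two costs and derive a contradiction
  have hxsrest : ∀ i ∈ s, xs i = 0 := fun i hi =>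
    hs3 i (mem_rest n hi).1 (mem_rest n hi).2
  have hsum_x : ∑ i, (xm + xs) i * lin n i ((xm + xs) i)
      = 1 + xm 1 * xm 1 + ∑ i ∈ s, xm i * xm i := by
    rw [sum_split n hn]
    simp only [Pi.add_apply, lin, hm2, hxs0, hxs1, zero_add, add_zero]
    congr 1
    · ring
    · refine Finset.sum_congr rfl fun i hi => ?_
      rw [hxsrest i hi, add_zero]
  have hsum_y : ∑ i, (ym + xs) i * lin n i ((ym + xs) i)
      = 1 + (1 + α) * (1 + α) + ∑ i ∈ s, (xm i + c) * (xm i + c) := by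
    rw [sum_split n hn]
    simp only [Pi.add_apply, lin, hym0, hym1, hxs0, hxs1, zero_add, add_zero]
    congr 1
    · ring
    · refine Finset.sum_congr rfl fun i hi => ?_
      obtain ⟨hi0, hi1⟩ := mem_rest n hi
      rw [hxsrest i hi, add_zero]
      simp [hym, hi0, hi1]
  have hexp : ∑ i ∈ s, (xm i + c) * (xm i + c)
      = ∑ i ∈ s, xm i * xm i + 2 * c * ((n:ℝ) - 1 - xm 1) + ((n:ℝ) - 2) * c * c := by
    have : ∀ i ∈ s, (xm i + c) * (xm i + c) = xm i * xm i + 2 * c * xm i + c * c :=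
      fun i _ => by ring
    rw [Finset.sum_congr rfl this, Finset.sum_add_distrib, Finset.sum_add_distrib,
      Finset.sum_const, nsmul_eq_mul, hcards, ← Finset.mul_sum, hsumrest]
    ring
  -- strict improvement
  have key : (1 + α) * (1 + α) + 2 * c * ((n:ℝ) - 1 - xm 1) + ((n:ℝ) - 2) * c * c
      < xm 1 * xm 1 := by
    have hxm1 : xm 1 = 1 + α + d := by rw [hd]; ring
    rw [hxm1]
    exact key_ineq α c d (n:ℝ) hα hd0 hc0 hcd
  have hnpos : (0:ℝ) < (n:ℝ) := by linarith
  have hstrict : F ⟨ym, xs⟩ < F p := by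
    show cost n (lin n) α (ym + xs) < cost n (lin n) α (p.1 + p.2)
    have hpp : cost n (lin n) α (p.1 + p.2) = cost n (lin n) α (xm + xs) := rfl
    rw [hpp]
    unfold cost
    rw [hsum_x, hsum_y, hexp]
    have h0eq : (ym + xs) 0 = (xm + xs) 0 := by
      simp [Pi.add_apply, hym0, hm2]
    rw [h0eq]
    have hAB : 1 + (1 + α) * (1 + α) +
        (∑ i ∈ s, xm i * xm i + 2 * c * ((n:ℝ) - 1 - xm 1) + ((n:ℝ) - 2) * c * c)
        < 1 + xm 1 * xm 1 + ∑ i ∈ s, xm i * xm i := by linarith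
    exact add_lt_add_left (div_lt_div_of_pos_right hAB hnpos) _
  have hle2 : F p ≤ F ⟨ym, xs⟩ := hmin ⟨ym, xs⟩ hymS
  linarith
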